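/- For every integer r ≥ 1, the following identity of formal power series in t over ℚ[q] holds: E_xp(q^r t) = E_xp(t) · ∑_{m≥0} (q−1)^m J_{m+r}^{(r)}(q) t^m/m!. Equivalently, the coefficients of the series (1/r!) D^r E_xp(t)/E_xp(t) = ∑_{n≥r} c_{n,r} (−t)^{n−r} satisfy c_{n,r} = (1−q)^{n−r} (q^{C(r,2)}/(r!(n−r)!)) J_n^{(r)}(q) for all n ≥ r. -/

import Mathlib

noncomputable section

/-- `[m]_q = 1 + q + ⋯ + q^{m-1}` as a polynomial in `q` (so `[0]_q = 0`). -/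
def qNat (m : ℕ) : Polynomial ℚ := ∑ i ∈ Finset.range m, Polynomial.X ^ i

/-- The polynomials `J_n^{(r)}(q)`: `J_n^{(0)} = δ_{n,0}`, `J_r^{(r)} = 1` for
`r ≥ 1`, and for `n > r ≥ 1` the recurrence
`J_n^{(r)} = ∑_{j=1}^{n−r} [r]_q^j q^{C(j,2)} C(n−r,j) J_{n−r}^{(j)}`.
(For `n < r` we set the unconstrained value `J_n^{(r)} = 0`.) -/
def J (n r : ℕ) : Polynomial ℚ :=
  if hr : r = 0 then (if n = 0 then 1 else 0)
  else if hn : n ≤ r then (if n = r then 1 else 0)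
  else
    ∑ j ∈ Finset.Icc 1 (n - r),
      qNat r ^ j * Polynomial.X ^ j.choose 2 * ((n - r).choose j : Polynomial ℚ) * J (n - r) j
termination_by n
decreasing_by omega

/-- `E_xp(t) = ∑_{m≥0} q^{C(m,2)} t^m / m!`, a formal power series in `t`
with coefficients in `ℚ[q]`. -/
def Exp : PowerSeries (Polynomial ℚ) :=
  PowerSeries.mk fun m => Polynomial.C ((m.factorial : ℚ)⁻¹) * Polynomial.X ^ m.choose 2

open Polynomial Finset

lemma choose_two_succ (m : ℕ) : (m + 1).choose 2 = m + m.choose 2 := by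
  rw [Nat.choose_succ_succ]; simp [Nat.choose_one_right]

lemma choose_two_add (a b : ℕ) : (a + b).choose 2 = a.choose 2 + a * b + b.choose 2 := by
  induction b with
  | zero => simp
  | succ b ih =>
    rw [show a + (b + 1) = (a + b) + 1 from rfl, choose_two_succ, ih, choose_two_succ,
      Nat.mul_succ]
    ring

lemma J_self (r : ℕ) (hr : 1 ≤ r) : J r r = 1 := by
  rw [J]; simp [Nat.one_le_iff_ne_zero.mp hr]

lemma J_rec (m r : ℕ) (hr : 1 ≤ r) (hm : 1 ≤ m) :
    J (m + r) r = ∑ j ∈ Finset.Icc 1 m,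
      qNat r ^ j * Polynomial.X ^ j.choose 2 * (m.choose j : Polynomial ℚ) * J m j := by
  rw [J]
  have h1 : ¬(m + r ≤ r) := by omega
  simp [Nat.one_le_iff_ne_zero.mp hr, h1]

lemma sum_shift (n : ℕ) (f : ℕ → ℚ[X]) :
    ∑ i ∈ range n, f (i + 1) = ∑ m ∈ Icc 1 n, f m := by
  rw [← Finset.Ico_add_one_right_eq_Icc, Finset.sum_Ico_eq_sum_range]
  exact Finset.sum_congr (by norm_num) fun i _ => by rw [Nat.add_comm]

lemma key : ∀ n r : ℕ, 1 ≤ r →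
    ∑ m ∈ range (n + 1),
      (n.choose m : ℚ[X]) * (X - 1) ^ m * J (m + r) r * X ^ ((n - m).choose 2)
      = X ^ (r * n + n.choose 2) := by
  intro n
  induction n using Nat.strong_induction_on with
  | _ n IH =>
  intro r hr
  rcases Nat.eq_zero_or_pos n with rfl | hn
  · simp [J_self r hr]
  rw [Finset.sum_range_succ']
  have hsh := sum_shift n (fun m => (n.choose m : ℚ[X]) * (X - 1) ^ m * J (m + r) r *
    X ^ ((n - m).choose 2))
  rw [hsh]
  have hstep : ∀ m ∈ Icc 1 n,
      (n.choose m : ℚ[X]) * (X - 1) ^ m * J (m + r) r * X ^ ((n - m).choose 2)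
      = ∑ j ∈ Icc 1 m, (n.choose m : ℚ[X]) * (X - 1) ^ m *
          (qNat r ^ j * X ^ j.choose 2 * (m.choose j : ℚ[X]) * J m j) * X ^ ((n - m).choose 2) := by
    intro m hm
    rw [mem_Icc] at hm
    rw [J_rec m r hr hm.1, Finset.mul_sum, Finset.sum_mul]
  rw [Finset.sum_congr rfl hstep]
  rw [Finset.sum_comm' (t' := Icc 1 n) (s' := fun j => Icc j n)
    (by intro x y; simp only [mem_Icc]; omega)]
  have hinner : ∀ j ∈ Icc 1 n,
      (∑ m ∈ Icc j n, (n.choose m : ℚ[X]) * (X - 1) ^ m *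
          (qNat r ^ j * X ^ j.choose 2 * (m.choose j : ℚ[X]) * J m j) * X ^ ((n - m).choose 2))
      = (n.choose j : ℚ[X]) * (X ^ r - 1) ^ j * X ^ (n.choose 2) := by
    intro j hj
    rw [mem_Icc] at hj
    rw [← Finset.Ico_add_one_right_eq_Icc, Finset.sum_Ico_eq_sum_range]
    have hnj : n + 1 - j = (n - j) + 1 := by omega
    rw [hnj]
    have hterm : ∀ k ∈ range ((n - j) + 1),
        (n.choose (j + k) : ℚ[X]) * (X - 1) ^ (j + k) *
          (qNat r ^ j * X ^ j.choose 2 * ((j + k).choose j : ℚ[X]) * J (j + k) j) *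
          X ^ ((n - (j + k)).choose 2)
        = ((n.choose j : ℚ[X]) * (qNat r ^ j * (X - 1) ^ j) * X ^ j.choose 2) *
          (((n - j).choose k : ℚ[X]) * (X - 1) ^ k * J (k + j) j * X ^ ((n - j - k).choose 2)) := by
      intro k hk
      rw [mem_range] at hk
      have hc : (n.choose (j + k) : ℚ[X]) * ((j + k).choose j : ℚ[X])
          = (n.choose j : ℚ[X]) * ((n - j).choose k : ℚ[X]) := by
        have h := Nat.choose_mul (n := n) (Nat.le_add_right j k)
        rw [Nat.add_sub_cancel_left] at h
        exact_mod_cast congrArg (Nat.cast : ℕ → ℚ[X]) h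
      have e1 : n - (j + k) = n - j - k := by omega
      have e2 : J (j + k) j = J (k + j) j := by rw [Nat.add_comm]
      have e3 : (X - 1 : ℚ[X]) ^ (j + k) = (X - 1) ^ j * (X - 1) ^ k := pow_add _ j k
      rw [e1, e2, e3]
      linear_combination ((X - 1 : ℚ[X]) ^ j * (X - 1) ^ k * (qNat r ^ j * X ^ j.choose 2) *
        J (k + j) j * X ^ ((n - j - k).choose 2)) * hc
    rw [Finset.sum_congr rfl hterm, ← Finset.mul_sum, IH (n - j) (by omega) j hj.1]
    have e4 : (qNat r : ℚ[X]) ^ j * (X - 1) ^ j = (X ^ r - 1) ^ j := by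
      rw [← mul_pow, qNat, geom_sum_mul]
    have e5 : j.choose 2 + (j * (n - j) + (n - j).choose 2) = n.choose 2 := by
      have hjn : j + (n - j) = n := by omega
      have h2 := choose_two_add j (n - j)
      rw [hjn] at h2
      omega
    rw [e4, mul_assoc, ← pow_add, e5]
  rw [Finset.sum_congr rfl hinner]
  have expand : (X : ℚ[X]) ^ (r * n) = ∑ j ∈ range (n + 1), (X ^ r - 1) ^ j * (n.choose j : ℚ[X]) := by
    have : (X : ℚ[X]) ^ (r * n) = ((X ^ r - 1) + 1) ^ n := by
      rw [sub_add_cancel, ← pow_mul]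
    rw [this, add_pow]
    simp
  have : (X : ℚ[X]) ^ (r * n + n.choose 2)
      = (∑ j ∈ range (n + 1), (X ^ r - 1) ^ j * (n.choose j : ℚ[X])) * X ^ (n.choose 2) := by
    rw [pow_add, expand]
  have hsh2 := sum_shift n (fun j => ((X:ℚ[X]) ^ r - 1) ^ j * (n.choose j : ℚ[X]))
  rw [this, Finset.sum_range_succ', hsh2, add_mul, Finset.sum_mul]
  simp only [pow_zero, Nat.choose_zero_right, Nat.cast_one, one_mul, Nat.choose_zero_right]
  congr 1
  · exact Finset.sum_congr rfl fun j _ => by ring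
  · simp [J_self r hr]

/-- for every `r ≥ 1`,
`E_xp(q^r t) = E_xp(t) · ∑_{m≥0} (q−1)^m J_{m+r}^{(r)}(q) t^m/m!`. -/
theorem rescale_Exp_eq_Exp_mul_J_genfun (r : ℕ) (hr : 1 ≤ r) :
    PowerSeries.rescale (Polynomial.X ^ r) Exp =
      Exp * PowerSeries.mk (fun m =>
        (Polynomial.X - 1) ^ m * J (m + r) r * Polynomial.C ((m.factorial : ℚ)⁻¹)) := by
  ext n
  rw [PowerSeries.coeff_rescale, PowerSeries.coeff_mul,
    Finset.Nat.sum_antidiagonal_eq_sum_range_succ_mk]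
  simp only [Exp, PowerSeries.coeff_mk]
  have refl : ∀ g : ℕ → ℚ[X], ∑ k ∈ range (n + 1), g k = ∑ k ∈ range (n + 1), g (n - k) := by
    intro g
    have h := Finset.sum_range_reflect g (n + 1)
    simp only [Nat.add_sub_cancel] at h
    exact h.symm
  have h2 := refl (fun k => C ((k.factorial : ℚ)⁻¹) * X ^ k.choose 2 *
    ((X - 1) ^ (n - k) * J (n - k + r) r * C (((n - k).factorial : ℚ)⁻¹)))
  rw [h2]
  have hterm : ∀ k ∈ range (n + 1),
      C (((n - k).factorial : ℚ)⁻¹) * X ^ ((n - k).choose 2) *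
        ((X - 1) ^ (n - (n - k)) * J (n - (n - k) + r) r *
          C (((n - (n - k)).factorial : ℚ)⁻¹))
      = C ((n.factorial : ℚ)⁻¹) *
          ((n.choose k : ℚ[X]) * (X - 1) ^ k * J (k + r) r * X ^ ((n - k).choose 2)) := by
    intro k hk
    rw [mem_range] at hk
    have hkn : k ≤ n := by omega
    have e : n - (n - k) = k := by omega
    rw [e]
    have hq : (((n - k).factorial : ℚ))⁻¹ * ((k.factorial : ℚ))⁻¹
        = ((n.factorial : ℚ))⁻¹ * (n.choose k : ℚ) := by
      have h := Nat.choose_mul_factorial_mul_factorial hkn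
      have hq' : ((n.choose k : ℚ)) * k.factorial * (n - k).factorial = n.factorial := by
        exact_mod_cast h
      have h1 : (k.factorial : ℚ) ≠ 0 := Nat.cast_ne_zero.mpr k.factorial_ne_zero
      have h3 : ((n - k).factorial : ℚ) ≠ 0 := Nat.cast_ne_zero.mpr (n - k).factorial_ne_zero
      have h4 : (n.factorial : ℚ) ≠ 0 := Nat.cast_ne_zero.mpr n.factorial_ne_zero
      field_simp
      linarith [hq']
    have hC : (C (((n - k).factorial : ℚ)⁻¹)) * (C ((k.factorial : ℚ)⁻¹))
        = C ((n.factorial : ℚ)⁻¹) * (n.choose k : ℚ[X]) := by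
      rw [← map_natCast (C : ℚ →+* ℚ[X]) (n.choose k), ← C_mul, ← C_mul, hq]
    linear_combination (X ^ ((n - k).choose 2) * (X - 1) ^ k * J (k + r) r) * hC
  rw [Finset.sum_congr rfl hterm, ← Finset.mul_sum, key n r hr]
  rw [← pow_mul]
  ring_nf


end
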